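/- arXiv:1104.1230 — 2 statements merged into one kernel-verified Lean document; each statement's English description precedes it below -/
import Mathlib

section
/- Every bounded above cochain complex X of left Ω-modules whose cohomology modules H^i(X) are all finitely generated over Ω admits a quasi-isomorphic subcomplex of finitely generated modules: there exist a cochain complex Y in which every term Y^i is a finitely generated Ω-module and a morphism of complexes Y → X that is injective in every degree and is a quasi-isomorphism. -/
/-!
STATEMENT 8: Over a left Noetherian ring `Ω`, every bounded above cochain complex of
left `Ω`-modules whose cohomology modules are all finitely generated admits a
quasi-isomorphic subcomplex of finitely generated modules.
-/

open CategoryTheory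

lemma quasiIso_of_moduleCat {R : Type} [Ring R]
    {S₁ S₂ : ShortComplex (ModuleCat R)} (φ : S₁ ⟶ S₂)
    (hinj : ∀ (y : S₁.X₂), S₁.g y = 0 → (∃ x, S₂.f x = φ.τ₂ y) → ∃ x, S₁.f x = y)
    (hsurj : ∀ (z : S₂.X₂), S₂.g z = 0 → ∃ (y : S₁.X₂) (x : S₂.X₁),
        S₁.g y = 0 ∧ z = φ.τ₂ y + S₂.f x) :
    ShortComplex.QuasiIso φ := by
  have hc23 : ∀ (y : S₁.X₂), S₂.g (φ.τ₂ y) = φ.τ₃ (S₁.g y) := by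
    intro y
    have h := φ.comm₂₃
    have := congrFun (congrArg (fun (f : S₁.X₂ ⟶ S₂.X₃) => (f : S₁.X₂ → S₂.X₃)) h) y
    simpa using this
  have hc12 : ∀ (x : S₁.X₁), φ.τ₂ (S₁.f x) = S₂.f (φ.τ₁ x) := by
    intro x
    have h := φ.comm₁₂
    have := congrFun (congrArg (fun (f : S₁.X₁ ⟶ S₂.X₂) => (f : S₁.X₁ → S₂.X₂)) h) x
    simpa using this.symm
  have hker : ∀ y ∈ LinearMap.ker S₁.g.hom, φ.τ₂.hom y ∈ LinearMap.ker S₂.g.hom := by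
    intro y hy
    simp only [LinearMap.mem_ker] at hy ⊢
    rw [hc23, hy, map_zero]
  set φK : LinearMap.ker S₁.g.hom →ₗ[R] LinearMap.ker S₂.g.hom :=
    φ.τ₂.hom.restrict hker with hφK
  have hφKval : ∀ y : LinearMap.ker S₁.g.hom, (φK y : S₂.X₂) = φ.τ₂ (y : S₁.X₂) := fun y => rfl
  have hle : LinearMap.range S₁.moduleCatToCycles ≤
      (LinearMap.range S₂.moduleCatToCycles).comap φK := by
    rintro _ ⟨x, rfl⟩
    refine ⟨φ.τ₁ x, ?_⟩
    apply Subtype.ext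
    show S₂.f (φ.τ₁ x) = φ.τ₂ (S₁.f x)
    exact (hc12 x).symm
  set φH : S₁.moduleCatLeftHomologyData.H →ₗ[R] S₂.moduleCatLeftHomologyData.H :=
    Submodule.mapQ _ _ φK hle with hφH
  have hbij : Function.Bijective φH := by
    constructor
    · rw [← LinearMap.ker_eq_bot, Submodule.eq_bot_iff]
      intro q hq
      obtain ⟨y, rfl⟩ := Submodule.mkQ_surjective _ q
      have hq' : Submodule.Quotient.mk (φK y) =
          (0 : LinearMap.ker S₂.g.hom ⧸ LinearMap.range S₂.moduleCatToCycles) := hq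
      rw [Submodule.Quotient.mk_eq_zero] at hq'
      replace hq := hq'
      obtain ⟨x, hx⟩ := hq
      obtain ⟨x', hx'⟩ := hinj (y : S₁.X₂) y.2 ⟨x, congrArg Subtype.val hx⟩
      rw [Submodule.mkQ_apply]
      exact (Submodule.Quotient.mk_eq_zero _).2 ⟨x', Subtype.ext hx'⟩
    · intro q
      obtain ⟨z, rfl⟩ := Submodule.mkQ_surjective _ q
      obtain ⟨y, x, hy, hz⟩ := hsurj (z : S₂.X₂) z.2
      refine ⟨Submodule.Quotient.mk ⟨y, hy⟩, ?_⟩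
      show Submodule.Quotient.mk (φK ⟨y, hy⟩) = Submodule.Quotient.mk z
      rw [← sub_eq_zero, ← Submodule.Quotient.mk_sub, Submodule.Quotient.mk_eq_zero]
      refine ⟨-x, Subtype.ext ?_⟩
      show S₂.f (-x) = φ.τ₂ y - (z : S₂.X₂)
      rw [map_neg, hz]
      abel
  let γ : ShortComplex.LeftHomologyMapData φ S₁.moduleCatLeftHomologyData
      S₂.moduleCatLeftHomologyData :=
    ⟨ModuleCat.ofHom φK, ModuleCat.ofHom φH, by ext x; rfl, by
      ext x
      apply Subtype.ext
      show φ.τ₂ (S₁.f x) = S₂.f (φ.τ₁ x)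
      exact hc12 x, by ext x; rfl⟩
  rw [γ.quasiIso_iff]
  exact (LinearEquiv.ofBijective φH hbij).toModuleIso.isIso_hom

section Construction

variable {Ω : Type} [Ring Ω] [IsNoetherianRing Ω] (X : CochainComplex (ModuleCat Ω) ℤ)

lemma hfg_concrete (hfg : ∀ i : ℤ, Module.Finite Ω (X.homology i)) (i j k : ℤ)
    (hij : i + 1 = j) (hjk : j + 1 = k) :
    Module.Finite Ω ((X.sc' i j k).moduleCatLeftHomologyData.H) := by
  have := hfg j
  have e : X.homology j ≅ (X.sc' i j k).moduleCatLeftHomologyData.H :=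
    X.homologyIsoSc' i j k (by simp; omega) (by simp; omega) ≪≫
      ShortComplex.moduleCatHomologyIso _
  exact Module.Finite.equiv e.toLinearEquiv

lemma step_exists (hfg : ∀ i : ℤ, Module.Finite Ω (X.homology i))
    (i j k : ℤ) (hij : i + 1 = j) (hjk : j + 1 = k)
    (T : Submodule Ω (X.X k)) (hT : T.FG) :
    ∃ Yj : Submodule Ω (X.X j), Yj.FG ∧
      Yj.map (X.d j k).hom ≤ T ∧
      (∀ z : X.X j, X.d j k z = 0 → ∃ y ∈ Yj, X.d j k y = 0 ∧
        ∃ x, X.d i j x = z - y) ∧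
      T ⊓ LinearMap.range (X.d j k).hom ≤ Yj.map (X.d j k).hom := by
  classical
  set S := X.sc' i j k with hS
  have hSf : S.f = X.d i j := rfl
  have hSg : S.g = X.d j k := rfl
  set K : Submodule Ω (X.X j) := LinearMap.ker (X.d j k).hom with hK
  set N : Submodule Ω K := LinearMap.range S.moduleCatToCycles with hN
  have hH : Module.Finite Ω (K ⧸ N) := hfg_concrete X hfg i j k hij hjk
  obtain ⟨s, hs⟩ := hH.fg_top
  -- lift generators of the quotient to K
  have hsurj := Submodule.mkQ_surjective N
  set σ : (K ⧸ N) → K := Function.surjInv hsurj with hσ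
  set u : Set K := σ '' ↑s with hu
  have hufin : u.Finite := (s.finite_toSet.image _)
  have hKsub : ∀ x : K, x ∈ Submodule.span Ω u ⊔ N := by
    intro x
    have hx : N.mkQ x ∈ Submodule.span Ω (N.mkQ '' u) := by
      have himg : N.mkQ '' u = ↑s := by
        rw [hu, Set.image_image]
        have : ∀ q, N.mkQ (σ q) = q := fun q => Function.surjInv_eq hsurj q
        simp [this]
      rw [himg, hs]
      trivial
    rw [← Submodule.map_span] at hx
    obtain ⟨w, hw, hwx⟩ := hx
    have : x - w ∈ N := by
      rw [← Submodule.Quotient.mk_eq_zero]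
      have : N.mkQ (x - w) = 0 := by rw [map_sub, hwx, sub_self]
      simpa using this
    exact Submodule.mem_sup.2 ⟨w, hw, x - w, this, by abel⟩
  set Y₁ : Submodule Ω (X.X j) := Submodule.span Ω (K.subtype '' u) with hY₁
  have hTB : (T ⊓ LinearMap.range (X.d j k).hom).FG := by
    have hNoeth : IsNoetherian Ω T := isNoetherian_of_fg_of_noetherian T hT
    have h1 : ((LinearMap.range (X.d j k).hom).comap T.subtype).FG :=
      IsNoetherian.noetherian _
    have h2 := h1.map T.subtype
    rwa [Submodule.map_comap_subtype] at h2
  obtain ⟨v, hv⟩ := hTB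
  set ρ : X.X k → X.X j := fun w => if h : ∃ x, X.d j k x = w then h.choose else 0 with hρ
  have hρ_spec : ∀ w ∈ LinearMap.range (X.d j k).hom, X.d j k (ρ w) = w := by
    intro w hw
    obtain ⟨x, hx⟩ := hw
    have hex : ∃ x, X.d j k x = w := ⟨x, hx⟩
    simp only [hρ, dif_pos hex]
    exact hex.choose_spec
  set Y₂ : Submodule Ω (X.X j) := Submodule.span Ω (ρ '' ↑v) with hY₂
  have hv_sub : (↑v : Set (X.X k)) ⊆ ↑(T ⊓ LinearMap.range (X.d j k).hom) := by
    rw [← hv]; exact Submodule.subset_span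
  have hY₂map : Y₂.map (X.d j k).hom = T ⊓ LinearMap.range (X.d j k).hom := by
    rw [hY₂, Submodule.map_span, Set.image_image, ← hv]
    congr 1
    rw [Set.image_congr (fun w hw => hρ_spec w (Submodule.mem_inf.1 (hv_sub hw)).2),
      Set.image_id']
  refine ⟨Y₁ ⊔ Y₂, ?_, ?_, ?_, ?_⟩
  · exact Submodule.FG.sup
      (Submodule.fg_def.2 ⟨_, hufin.image _, rfl⟩)
      (Submodule.fg_def.2 ⟨_, v.finite_toSet.image _, rfl⟩)
  · rw [Submodule.map_sup]
    apply sup_le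
    · rw [hY₁, Submodule.map_span]
      apply Submodule.span_le.2
      rintro _ ⟨_, ⟨y, hy, rfl⟩, rfl⟩
      have h0 : X.d j k (K.subtype y) = 0 := y.2
      rw [h0]
      exact T.zero_mem
    · rw [hY₂map]
      exact inf_le_left
  · intro z hz
    have hdecomp := Submodule.mem_sup.1 (hKsub ⟨z, hz⟩)
    obtain ⟨w, hw, nn, hnn, hsum⟩ := hdecomp
    refine ⟨(w : X.X j), ?_, w.2, ?_⟩
    · apply Submodule.mem_sup_left
      have hmem := Submodule.mem_map_of_mem (f := K.subtype) hw
      rwa [Submodule.map_span] at hmem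
    · obtain ⟨x, hx⟩ := hnn
      refine ⟨x, ?_⟩
      have hval : (nn : X.X j) = X.d i j x := by rw [← hx]; rfl
      have hsum' : (w : X.X j) + (nn : X.X j) = z := congrArg Subtype.val hsum
      rw [← hval]
      rw [← hsum']
      abel
  · rw [Submodule.map_sup]
    exact le_sup_of_le_right hY₂map.ge

variable (hfg : ∀ i : ℤ, Module.Finite Ω (X.homology i))

open Classical in
noncomputable def stepFun (j : ℤ) (T : Submodule Ω (X.X (j+1))) : Submodule Ω (X.X j) :=
  if h : T.FG then (step_exists X hfg (j-1) j (j+1) (by ring) rfl T h).choose else ⊥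

lemma stepFun_spec (j : ℤ) (T : Submodule Ω (X.X (j+1))) (hT : T.FG) :
    (stepFun X hfg j T).FG ∧ (stepFun X hfg j T).map (X.d j (j+1)).hom ≤ T ∧
    (∀ z : X.X j, X.d j (j+1) z = 0 → ∃ y ∈ stepFun X hfg j T, X.d j (j+1) y = 0 ∧
      ∃ x, X.d (j-1) j x = z - y) ∧
    T ⊓ LinearMap.range (X.d j (j+1)).hom ≤ (stepFun X hfg j T).map (X.d j (j+1)).hom := by
  simp only [stepFun, dif_pos hT]
  exact (step_exists X hfg (j-1) j (j+1) (by ring) rfl T hT).choose_spec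

lemma stepFun_fg (j : ℤ) (T : Submodule Ω (X.X (j+1))) : (stepFun X hfg j T).FG := by
  by_cases h : T.FG
  · exact (stepFun_spec X hfg j T h).1
  · simp only [stepFun, dif_neg h]
    exact Submodule.fg_bot

noncomputable def auxS (n : ℤ) : ℕ → ∀ j : ℤ, Submodule Ω (X.X j)
  | 0, _ => ⊥
  | (kk+1), j => if j = n - (kk+1 : ℕ) then stepFun X hfg j (auxS n kk (j+1))
      else auxS n kk j

noncomputable def SS (n j : ℤ) : Submodule Ω (X.X j) := auxS X hfg n (n - j).toNat j

lemma auxS_stable (n : ℤ) : ∀ (kk : ℕ) (j : ℤ), (n - j).toNat ≤ kk →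
    auxS X hfg n kk j = SS X hfg n j
  | 0, j, h => by
      have h0 : (n - j).toNat = 0 := Nat.le_zero.1 h
      rw [SS, h0]
  | (kk+1), j, h => by
      by_cases hk : (n - j).toNat ≤ kk
      · have hne : j ≠ n - (kk+1 : ℕ) := by omega
        simp only [auxS, if_neg hne]
        exact auxS_stable n kk j hk
      · have heq : (n - j).toNat = kk+1 := by omega
        rw [SS, heq]

lemma SS_bot (n j : ℤ) (h : n ≤ j) : SS X hfg n j = ⊥ := by
  have h0 : (n - j).toNat = 0 := by omega
  rw [SS, h0]
  rfl

lemma SS_step (n j : ℤ) (h : j < n) :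
    SS X hfg n j = stepFun X hfg j (SS X hfg n (j+1)) := by
  have h1 : (n - j).toNat = (n - (j+1)).toNat + 1 := by omega
  rw [SS, h1]
  simp only [auxS]
  rw [if_pos (by omega : j = n - ((n - (j+1)).toNat + 1 : ℕ))]
  rw [auxS_stable X hfg n ((n - (j+1)).toNat) (j+1) (le_refl _)]

lemma SS_fg (n j : ℤ) : (SS X hfg n j).FG := by
  rcases le_or_gt n j with h | h
  · rw [SS_bot X hfg n j h]
    exact Submodule.fg_bot
  · rw [SS_step X hfg n j h]
    exact stepFun_fg X hfg _ _

lemma SS_mapd (n j : ℤ) : (SS X hfg n j).map (X.d j (j+1)).hom ≤ SS X hfg n (j+1) := by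
  rcases le_or_gt n j with h | h
  · rw [SS_bot X hfg n j h, Submodule.map_bot]
    exact bot_le
  · rw [SS_step X hfg n j h]
    exact (stepFun_spec X hfg j _ (SS_fg X hfg n (j+1))).2.1

lemma SS_surj (n : ℤ) (hn : ∀ i : ℤ, n ≤ i → Limits.IsZero (X.X i)) (j : ℤ)
    (z : X.X j) (hz : X.d j (j+1) z = 0) :
    ∃ y ∈ SS X hfg n j, X.d j (j+1) y = 0 ∧ ∃ x, X.d (j-1) j x = z - y := by
  rcases le_or_gt n j with h | h
  · have hzero := hn j h
    have hsub : ∀ a b : X.X j, a = b := fun a b => by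
      have h0 : (𝟙 (X.X j) : X.X j ⟶ X.X j) = 0 := hzero.eq_of_src _ _
      calc a = (𝟙 (X.X j) : X.X j ⟶ X.X j) a := rfl
        _ = (0 : X.X j ⟶ X.X j) a := by rw [h0]
        _ = 0 := rfl
        _ = (0 : X.X j ⟶ X.X j) b := rfl
        _ = (𝟙 (X.X j) : X.X j ⟶ X.X j) b := by rw [h0]
        _ = b := rfl
    refine ⟨0, Submodule.zero_mem _, by simp, 0, ?_⟩
    rw [map_zero]
    exact hsub _ _
  · rw [SS_step X hfg n j h]
    exact (stepFun_spec X hfg j _ (SS_fg X hfg n (j+1))).2.2.1 z hz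

lemma SS_inj (n : ℤ) (i j : ℤ) (hij : i + 1 = j) :
    SS X hfg n j ⊓ LinearMap.range (X.d i j).hom ≤ (SS X hfg n i).map (X.d i j).hom := by
  subst hij
  rcases le_or_gt n i with h | h
  · rw [SS_bot X hfg n (i+1) (by omega)]
    simp
  · have := (stepFun_spec X hfg i (SS X hfg n (i+1)) (SS_fg X hfg n (i+1))).2.2.2
    rw [← SS_step X hfg n i h] at this
    exact this

noncomputable def dRes (n i : ℤ) :
    ModuleCat.of Ω (SS X hfg n i) ⟶ ModuleCat.of Ω (SS X hfg n (i+1)) :=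
  ModuleCat.ofHom ((X.d i (i+1)).hom.restrict (fun x hx => SS_mapd X hfg n i (Submodule.mem_map_of_mem hx)))

noncomputable def Ycx (n : ℤ) : CochainComplex (ModuleCat Ω) ℤ where
  X j := ModuleCat.of Ω (SS X hfg n j)
  d i j := if h : i + 1 = j then dRes X hfg n i ≫ eqToHom (by rw [h]) else 0
  shape i j h := dif_neg h
  d_comp_d' i j k hij hjk := by
    simp only [ComplexShape.up_Rel] at hij hjk
    subst hij hjk
    rw [dif_pos rfl, dif_pos rfl]
    simp only [eqToHom_refl, Category.comp_id]
    apply ModuleCat.hom_ext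
    apply LinearMap.ext
    intro x
    apply Subtype.ext
    have h := X.d_comp_d i (i+1) (i+1+1)
    have h2 := ConcreteCategory.congr_hom h ((SS X hfg n i).subtype x)
    exact h2

lemma Ycx_d (n i : ℤ) : (Ycx X hfg n).d i (i+1) = dRes X hfg n i := by
  show (if h : i + 1 = i + 1 then dRes X hfg n i ≫ eqToHom (by rw [h]) else 0) = _
  rw [dif_pos rfl]
  simp

noncomputable def incl (n : ℤ) : Ycx X hfg n ⟶ X where
  f j := ModuleCat.ofHom (SS X hfg n j).subtype
  comm' i j hij := by
    simp only [ComplexShape.up_Rel] at hij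
    subst hij
    rw [Ycx_d X hfg n i]
    apply ModuleCat.hom_ext
    apply LinearMap.ext
    intro x
    rfl

lemma incl_comm (n i j : ℤ) (y : SS X hfg n i) :
    X.d i j (y : X.X i) = ((incl X hfg n).f j) (((Ycx X hfg n).d i j) y) := by
  have := ((incl X hfg n).comm i j)
  exact ConcreteCategory.congr_hom this y

end Construction


theorem exists_finite_subcomplex_quasiIso
    (Ω : Type) [Ring Ω] [IsNoetherianRing Ω]
    (X : CochainComplex (ModuleCat Ω) ℤ)
    (hbdd : ∃ n : ℤ, ∀ i : ℤ, n ≤ i → Limits.IsZero (X.X i))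
    (hfg : ∀ i : ℤ, Module.Finite Ω (X.homology i)) :
    ∃ (Y : CochainComplex (ModuleCat Ω) ℤ) (f : Y ⟶ X),
      (∀ i : ℤ, Module.Finite Ω (Y.X i)) ∧
      (∀ i : ℤ, Function.Injective (f.f i)) ∧
      QuasiIso f := by
  obtain ⟨n, hn⟩ := hbdd
  refine ⟨Ycx X hfg n, incl X hfg n, ?_, ?_, ?_⟩
  · intro i
    exact Module.Finite.iff_fg.2 (SS_fg X hfg n i)
  · intro i
    exact Subtype.val_injective
  · rw [quasiIso_iff]
    intro j
    rw [quasiIsoAt_iff' _ (j-1) j (j+1) (by simp) (by simp)]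
    apply quasiIso_of_moduleCat
    · -- injectivity on homology
      intro y₀ hy hx
      let y : ↥(SS X hfg n j) := y₀
      have hy' : ((Ycx X hfg n).d j (j+1)) y = 0 := hy
      have hx' : ∃ x : X.X (j-1), X.d (j-1) j x = (y : X.X j) := hx
      have hmem : (y : X.X j) ∈ SS X hfg n j ⊓ LinearMap.range (X.d (j-1) j).hom :=
        ⟨y.2, hx'⟩
      obtain ⟨w, hw, hweq⟩ := SS_inj X hfg n (j-1) j (by ring) hmem
      refine ⟨⟨w, hw⟩, ?_⟩
      refine Subtype.ext ?_
      show ((incl X hfg n).f j) (((Ycx X hfg n).d (j-1) j) ⟨w, hw⟩) = (y : X.X j)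
      rw [← incl_comm]
      exact hweq
    · -- surjectivity on homology
      intro z₀ hz₀
      let z : X.X j := z₀
      have hz : X.d j (j+1) z = 0 := hz₀
      obtain ⟨y, hymem, hdy, x, hx⟩ := SS_surj X hfg n hn j z hz
      refine ⟨⟨y, hymem⟩, x, ?_, ?_⟩
      · refine Subtype.ext ?_
        show ((incl X hfg n).f (j+1)) (((Ycx X hfg n).d j (j+1)) ⟨y, hymem⟩) = 0
        rw [← incl_comm]
        exact hdy
      · show z = y + X.d (j-1) j x
        rw [hx, add_comm, sub_add_cancel]
end

section
/- If R is flat as a ℤ_p-module, then for every n ≥ 0 the n-th power I^n of the augmentation ideal of R[Γ] is a free R-module of finite rank. -/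
/-!
STATEMENT 9: Let `p` be a prime, `Γ` a finite group and `R` a commutative `ℤ_p`-algebra
that is flat as a `ℤ_p`-module.  Let `I` be the augmentation ideal of the group algebra
`R[Γ]`, i.e. the kernel of the `R`-algebra map `R[Γ] → R` sending every element of `Γ`
to `1`.  Then for every `n ≥ 0`, the `n`-th power `I^n` is a free `R`-module of finite rank.
-/

open TensorProduct

section

variable (R : Type) [CommRing R] (Γ : Type) [Group Γ]

/-- The augmentation map `R[Γ] → R`, sending every element of `Γ` to `1`. -/
noncomputable def augmentation : MonoidAlgebra R Γ →ₐ[R] R :=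
  (MonoidAlgebra.lift R R Γ) 1

/-- The augmentation ideal of `R[Γ]`, as an `R`-submodule of `R[Γ]`. -/
noncomputable def augIdeal : Submodule R (MonoidAlgebra R Γ) :=
  Submodule.restrictScalars R (RingHom.ker (augmentation R Γ).toRingHom)

/-- The `n`-th power `I^n` of the augmentation ideal `I` (with `I^0` the whole group
algebra), as an `R`-submodule of `R[Γ]`. -/
noncomputable def augIdealPow : ℕ → Submodule R (MonoidAlgebra R Γ)
  | 0 => ⊤
  | n + 1 => augIdeal R Γ * augIdealPow n

end

section Aux
variable (p : ℕ) [Fact p.Prime] (R : Type) [CommRing R] [Algebra ℤ_[p] R]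
  (Γ : Type) [Group Γ]

noncomputable def psi : MonoidAlgebra ℤ_[p] Γ →ₐ[ℤ_[p]] MonoidAlgebra R Γ :=
  (MonoidAlgebra.lift ℤ_[p] (MonoidAlgebra R Γ) Γ) (MonoidAlgebra.of R Γ)

lemma psi_single (g : Γ) (c : ℤ_[p]) :
    psi p R Γ (MonoidAlgebra.single g c) = MonoidAlgebra.single g (algebraMap ℤ_[p] R c) := by
  simp only [psi, MonoidAlgebra.lift_single, MonoidAlgebra.of_apply]
  rw [MonoidAlgebra.smul_single, Algebra.algebraMap_eq_smul_one]

lemma aug_single (g : Γ) (r : R) : augmentation R Γ (MonoidAlgebra.single g r) = r := by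
  simp [augmentation, MonoidAlgebra.lift_single]
end Aux

section Aux2
variable (p : ℕ) [Fact p.Prime] (R : Type) [CommRing R] [Algebra ℤ_[p] R]
  (Γ : Type) [Group Γ]

lemma psi_apply (x : MonoidAlgebra ℤ_[p] Γ) (g : Γ) :
    (psi p R Γ x).coeff g = algebraMap ℤ_[p] R (x.coeff g) := by
  induction x using MonoidAlgebra.induction_linear with
  | zero => simp
  | add a b ha hb =>
      rw [map_add]
      show (psi p R Γ a).coeff g + (psi p R Γ b).coeff g = algebraMap ℤ_[p] R ((a + b).coeff g)
      rw [show (a+b).coeff g = a.coeff g + b.coeff g from rfl, ha, hb, map_add]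
  | single a c =>
      rw [psi_single]
      classical
      show Finsupp.single a (algebraMap ℤ_[p] R c) g = algebraMap ℤ_[p] R (Finsupp.single a c g)
      rw [Finsupp.single_apply, Finsupp.single_apply]
      split <;> simp

lemma aug_psi (x : MonoidAlgebra ℤ_[p] Γ) :
    augmentation R Γ (psi p R Γ x) = algebraMap ℤ_[p] R (augmentation ℤ_[p] Γ x) := by
  have h : ((augmentation R Γ).restrictScalars ℤ_[p]).comp (psi p R Γ)
      = ((Algebra.ofId ℤ_[p] R).comp (augmentation ℤ_[p] Γ)) := by
    apply MonoidAlgebra.algHom_ext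
    intro g
    show augmentation R Γ (psi p R Γ (MonoidAlgebra.single g 1))
      = Algebra.ofId ℤ_[p] R (augmentation ℤ_[p] Γ (MonoidAlgebra.single g 1))
    rw [psi_single, map_one, aug_single, aug_single, Algebra.ofId_apply]
    exact (map_one _).symm
    exact Subsingleton.elim _ _
  exact congrArg (fun f => f x) (congrArg (fun f => f.toFun) h)
end Aux2

section Aux3
variable (p : ℕ) [Fact p.Prime] (R : Type) [CommRing R] [Algebra ℤ_[p] R]
  (Γ : Type) [Group Γ]

lemma span_psi_span (S : Set (MonoidAlgebra ℤ_[p] Γ)) :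
    Submodule.span R (psi p R Γ '' (Submodule.span ℤ_[p] S : Submodule ℤ_[p] _))
      = Submodule.span R (psi p R Γ '' S) := by
  apply le_antisymm
  · rw [Submodule.span_le]
    rintro _ ⟨x, hx, rfl⟩
    induction hx using Submodule.span_induction with
    | mem y hy => exact Submodule.subset_span ⟨y, hy, rfl⟩
    | zero => rw [map_zero]; exact Submodule.zero_mem _
    | add y z _ _ hy hz => rw [map_add]; exact Submodule.add_mem _ hy hz
    | smul c y _ hy =>
        rw [map_smul, ← algebraMap_smul R c (psi p R Γ y)]
        exact Submodule.smul_mem _ _ hy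
  · exact Submodule.span_mono (Set.image_mono Submodule.subset_span)

lemma top_span : (⊤ : Submodule R (MonoidAlgebra R Γ))
    = Submodule.span R (psi p R Γ '' (⊤ : Submodule ℤ_[p] (MonoidAlgebra ℤ_[p] Γ))) := by
  apply le_antisymm _ le_top
  intro x _
  induction x using MonoidAlgebra.induction_linear with
  | zero => exact Submodule.zero_mem _
  | add a b ha hb => exact Submodule.add_mem _ (ha trivial) (hb trivial)
  | single g r =>
      have : (MonoidAlgebra.single g r : MonoidAlgebra R Γ)
          = r • psi p R Γ (MonoidAlgebra.single g 1) := by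
        rw [psi_single, map_one]
        rw [MonoidAlgebra.smul_single, smul_eq_mul, mul_one]
      rw [this]
      exact Submodule.smul_mem _ _ (Submodule.subset_span ⟨_, trivial, rfl⟩)

lemma augIdeal_span : augIdeal R Γ
    = Submodule.span R (psi p R Γ '' (augIdeal ℤ_[p] Γ : Submodule ℤ_[p] _)) := by
  apply le_antisymm
  · intro x hx
    have hx0 : augmentation R Γ x = 0 := hx
    have key : ∀ y : MonoidAlgebra R Γ,
        y - (augmentation R Γ y) • (MonoidAlgebra.single 1 1)
          ∈ Submodule.span R (psi p R Γ '' (augIdeal ℤ_[p] Γ : Submodule ℤ_[p] _)) := by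
      intro y
      induction y using MonoidAlgebra.induction_linear with
      | zero => simpa using Submodule.zero_mem _
      | add a b ha hb =>
          have : (a + b) - (augmentation R Γ (a+b)) • (MonoidAlgebra.single 1 1)
              = (a - (augmentation R Γ a) • (MonoidAlgebra.single 1 1))
                + (b - (augmentation R Γ b) • (MonoidAlgebra.single 1 1)) := by
            rw [map_add, add_smul, add_sub_add_comm]
          rw [this]; exact Submodule.add_mem _ ha hb
      | single g r =>
          have h1 : (MonoidAlgebra.single g r : MonoidAlgebra R Γ)
              - (augmentation R Γ (MonoidAlgebra.single g r)) • (MonoidAlgebra.single 1 1)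
              = r • psi p R Γ (MonoidAlgebra.single g 1 - MonoidAlgebra.single 1 1) := by
            rw [aug_single, map_sub, psi_single, psi_single, map_one, smul_sub]
            show MonoidAlgebra.single g r - _ = _
            rw [MonoidAlgebra.smul_single', MonoidAlgebra.smul_single']
            simp only [mul_one]
          rw [h1]
          refine Submodule.smul_mem _ _ (Submodule.subset_span ⟨_, ?_, rfl⟩)
          show MonoidAlgebra.single g 1 - MonoidAlgebra.single 1 1 ∈ augIdeal ℤ_[p] Γ
          show _ ∈ RingHom.ker _
          rw [RingHom.mem_ker]
          show augmentation ℤ_[p] Γ _ = 0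
          rw [map_sub, aug_single, aug_single, sub_self]
    have := key x
    rwa [hx0, zero_smul, sub_zero] at this
  · rw [Submodule.span_le]
    rintro _ ⟨y, hy, rfl⟩
    show augmentation R Γ (psi p R Γ y) = 0
    rw [aug_psi]
    have : augmentation ℤ_[p] Γ y = 0 := hy
    rw [this, map_zero]
end Aux3

section Aux4
variable (p : ℕ) [Fact p.Prime] (R : Type) [CommRing R] [Algebra ℤ_[p] R]
  (Γ : Type) [Group Γ]

lemma augIdealPow_span (n : ℕ) :
    augIdealPow R Γ n
      = Submodule.span R (psi p R Γ '' (augIdealPow ℤ_[p] Γ n : Set _)) := by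
  induction n with
  | zero =>
      rw [show augIdealPow R Γ 0 = ⊤ from rfl, show augIdealPow ℤ_[p] Γ 0 = ⊤ from rfl]
      exact top_span p R Γ
  | succ n ih =>
      rw [show augIdealPow R Γ (n+1) = augIdeal R Γ * augIdealPow R Γ n from rfl,
        show augIdealPow ℤ_[p] Γ (n+1) = augIdeal ℤ_[p] Γ * augIdealPow ℤ_[p] Γ n from rfl,
        augIdeal_span p R Γ, ih, Submodule.span_mul_span, ← Set.image_mul (psi p R Γ),
        Submodule.mul_def, span_psi_span]
end Aux4

theorem augIdealPow_free_finite
    (p : ℕ) [Fact p.Prime]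
    (R : Type) [CommRing R] [Algebra ℤ_[p] R] (hflat : Module.Flat ℤ_[p] R)
    (Γ : Type) [Group Γ] [Finite Γ] (n : ℕ) :
    Module.Free R (augIdealPow R Γ n) ∧ Module.Finite R (augIdealPow R Γ n) := by
  classical
  haveI := hflat
  set A := MonoidAlgebra ℤ_[p] Γ with hA
  set N := augIdealPow ℤ_[p] Γ n with hN
  haveI : Module.Finite ℤ_[p] A := Module.Finite.equiv (MonoidAlgebra.coeffLinearEquiv (S := ℤ_[p]) (M := Γ) ℤ_[p]).symm
  haveI : IsNoetherian ℤ_[p] A := isNoetherian_of_isNoetherianRing_of_finite ℤ_[p] A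
  haveI : Module.Finite ℤ_[p] ↥N := Module.Finite.iff_fg.mpr (IsNoetherian.noetherian N)
  haveI : NoZeroSMulDivisors ℤ_[p] A := by
    refine ⟨fun {c x} h => ?_⟩
    by_cases hc : c = 0
    · exact Or.inl hc
    · refine Or.inr (MonoidAlgebra.ext (Finsupp.ext fun g => ?_))
      have hg : (c • x).coeff g = 0 := by rw [h]; rfl
      have : c * x.coeff g = 0 := hg
      rcases mul_eq_zero.mp this with h' | h'
      · exact absurd h' hc
      · simpa using h'
  haveI : Module.Free ℤ_[p] ↥N := Module.free_of_finite_type_torsion_free'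
  set κ := Module.Free.ChooseBasisIndex ℤ_[p] ↥N with hκ
  let b : Module.Basis κ ℤ_[p] ↥N := Module.Free.chooseBasis ℤ_[p] ↥N
  let L : (κ →₀ ℤ_[p]) →ₗ[ℤ_[p]] A := N.subtype.comp b.repr.symm.toLinearMap
  have hL : Function.Injective L := N.injective_subtype.comp b.repr.symm.injective
  have hLinj : Function.Injective (L.lTensor R) :=
    Module.Flat.lTensor_preserves_injective_linearMap L hL
  let E1 := TensorProduct.finsuppScalarRight ℤ_[p] ℤ_[p] R κ
  let E2 := ((MonoidAlgebra.coeffLinearEquiv (S := ℤ_[p]) (M := Γ) ℤ_[p]).lTensor R).trans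
    ((TensorProduct.finsuppScalarRight ℤ_[p] ℤ_[p] R Γ).trans
      (MonoidAlgebra.coeffLinearEquiv (S := R) (M := Γ) ℤ_[p]).symm)
  let v : κ → MonoidAlgebra R Γ := fun i => psi p R Γ ((b i : A))
  have hFv : ∀ l : κ →₀ R, E2 ((L.lTensor R) (E1.symm l)) = Finsupp.linearCombination R v l := by
    intro l
    induction l using Finsupp.induction_linear with
    | zero => simp only [LinearEquiv.map_zero, LinearMap.map_zero, map_zero]
    | add a c ha hc =>
        rw [E1.symm.map_add, (L.lTensor R).map_add, E2.map_add,
          (Finsupp.linearCombination R v).map_add, ha, hc]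
    | single i r =>
        rw [TensorProduct.finsuppScalarRight_symm_apply_single, LinearMap.lTensor_tmul,
          Finsupp.linearCombination_single]
        have hLi : L (Finsupp.single i 1) = (b i : A) := by
          show N.subtype (b.repr.symm (Finsupp.single i 1)) = _
          rw [b.repr_symm_single_one]
          rfl
        rw [hLi]
        ext g
        show (TensorProduct.finsuppScalarRight ℤ_[p] ℤ_[p] R Γ
          (r ⊗ₜ (MonoidAlgebra.coeffLinearEquiv (S := ℤ_[p]) (M := Γ) ℤ_[p] (b i : A)))) g = _
        rw [TensorProduct.finsuppScalarRight_apply_tmul_apply]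
        show ((b i : A).coeff g) • r = (r • v i).coeff g
        rw [show (r • v i).coeff g = r • ((v i).coeff g) from rfl, Algebra.smul_def, smul_eq_mul]
        show _ = r * (psi p R Γ (b i : A)).coeff g
        rw [psi_apply, mul_comm]
  have hinj : Function.Injective (Finsupp.linearCombination R v) := by
    have : ⇑(Finsupp.linearCombination R v) = ⇑E2 ∘ ⇑(L.lTensor R) ∘ ⇑E1.symm := by
      funext l; exact (hFv l).symm
    rw [this]
    exact E2.injective.comp (hLinj.comp E1.symm.injective)
  have hli : LinearIndependent R v := by
    rw [linearIndependent_iff]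
    intro l hl
    exact hinj (by rw [hl, map_zero])
  have hNspan : N = Submodule.span ℤ_[p] (Set.range fun i => ((b i : A))) := by
    conv_lhs => rw [← Submodule.map_subtype_top N, ← b.span_eq]
    rw [Submodule.map_span, ← Set.range_comp]
    rfl
  have hspan : Submodule.span R (Set.range v) = augIdealPow R Γ n := by
    rw [augIdealPow_span p R Γ n, ← hN, hNspan, span_psi_span, ← Set.range_comp]
    rfl
  let bR : Module.Basis κ R ↥(Submodule.span R (Set.range v)) := Module.Basis.span hli
  let e : ↥(Submodule.span R (Set.range v)) ≃ₗ[R] ↥(augIdealPow R Γ n) :=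
    LinearEquiv.ofEq _ _ hspan
  haveI : Module.Finite R ↥(Submodule.span R (Set.range v)) :=
    Module.Finite.span_of_finite R (Set.finite_range v)
  exact ⟨Module.Free.of_basis (bR.map e), Module.Finite.equiv e⟩
end
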